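/- arXiv:2104.07563 — 2 statements merged into one kernel-verified Lean document; each statement's English description precedes it below -/
import Mathlib

section
/- The reach of O(d) as a subset of ℝ^{d×d} with the Frobenius distance is exactly 1. In particular: (a) any matrix A with Frobenius distance to O(d) strictly less than 1 has a unique closest orthogonal matrix, and (b) there exists a matrix at distance 1 from O(d) with two distinct closest orthogonal matrices. -/
open Matrix

/-- The Frobenius norm of a real matrix: `‖A‖ = sqrt (trace (Aᵀ A))`. -/
noncomputable def frobNorm {m n : Type*} [Fintype m] [Fintype n]
    (A : Matrix m n ℝ) : ℝ :=
  Real.sqrt (Matrix.trace (Aᵀ * A))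

namespace Matrix.PosSemidef
variable {n : Type*} [Fintype n] [DecidableEq n]
open scoped MatrixOrder in
noncomputable def sqrt {P : Matrix n n ℝ} (_hP : P.PosSemidef) : Matrix n n ℝ := CFC.sqrt P
open scoped MatrixOrder in
lemma sqrt_mul_self {P : Matrix n n ℝ} (hP : P.PosSemidef) : hP.sqrt * hP.sqrt = P :=
  CFC.sqrt_mul_sqrt_self P hP.nonneg
open scoped MatrixOrder in
lemma posSemidef_sqrt {P : Matrix n n ℝ} (hP : P.PosSemidef) : hP.sqrt.PosSemidef :=
  (CFC.sqrt_nonneg P).posSemidef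
end Matrix.PosSemidef

section Helpers

variable {n : Type*} [Fintype n] [DecidableEq n]

omit [DecidableEq n] in
lemma trace_transpose_mul_self (A : Matrix n n ℝ) :
    Matrix.trace (Aᵀ * A) = ∑ j, ∑ i, (A i j)^2 := by
  simp [Matrix.trace, Matrix.diag, Matrix.mul_apply, sq]

omit [DecidableEq n] in
lemma trace_transpose_mul_self_nonneg (A : Matrix n n ℝ) :
    0 ≤ Matrix.trace (Aᵀ * A) := by
  rw [trace_transpose_mul_self]; positivity

lemma core_ineq {P R : Matrix n n ℝ} (hP : P.PosSemidef) (hR : Rᵀ * R = 1) :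
    Matrix.trace ((hP.sqrt - R * hP.sqrt)ᵀ * (hP.sqrt - R * hP.sqrt))
      = 2 * (Matrix.trace P - Matrix.trace (P * R)) := by
  set T := hP.sqrt with hT
  have hTsym : Tᵀ = T := by
    have := hP.posSemidef_sqrt.1
    rwa [Matrix.IsHermitian, conjTranspose_eq_transpose_of_trivial] at this
  have hPsym : Pᵀ = P := by
    have := hP.1
    rwa [Matrix.IsHermitian, conjTranspose_eq_transpose_of_trivial] at this
  have hTT : T * T = P := hP.sqrt_mul_self
  have expand : (T - R * T)ᵀ * (T - R * T)
      = Tᵀ*T - Tᵀ*(R*T) - (Tᵀ*Rᵀ)*T + (Tᵀ*(Rᵀ*R))*T := by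
    rw [transpose_sub, transpose_mul]; noncomm_ring
  rw [expand]
  have h1 : Matrix.trace (Tᵀ*T) = Matrix.trace P := by
    rw [hTsym, hTT]
  have h2 : Matrix.trace (Tᵀ*(R*T)) = Matrix.trace (P * R) := by
    rw [hTsym, Matrix.trace_mul_comm, mul_assoc, hTT, Matrix.trace_mul_comm]
  have h3 : Matrix.trace ((Tᵀ*Rᵀ)*T) = Matrix.trace (P * R) := by
    rw [hTsym, Matrix.trace_mul_comm, ← mul_assoc, hTT]
    rw [show P * Rᵀ = (R * Pᵀ)ᵀ by rw [transpose_mul, transpose_transpose],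
      Matrix.trace_transpose, Matrix.trace_mul_comm, hPsym]
  have h4 : Matrix.trace ((Tᵀ*(Rᵀ*R))*T) = Matrix.trace P := by
    rw [hR, mul_one, hTsym, hTT]
  rw [Matrix.trace_add, Matrix.trace_sub, Matrix.trace_sub, h1, h2, h3, h4]
  ring

omit [DecidableEq n] in
lemma eq_zero_of_trace_transpose_mul_self {M : Matrix n n ℝ}
    (h : Matrix.trace (Mᵀ * M) = 0) : M = 0 := by
  rw [trace_transpose_mul_self] at h
  ext i j
  have hj := (Finset.sum_eq_zero_iff_of_nonneg
    (fun j _ => by positivity)).mp h j (Finset.mem_univ j)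
  have hi := (Finset.sum_eq_zero_iff_of_nonneg
    (fun i _ => sq_nonneg _)).mp hj i (Finset.mem_univ i)
  simpa using pow_eq_zero_iff (n := 2) two_ne_zero |>.mp hi

lemma trace_mul_orth_le {P R : Matrix n n ℝ} (hP : P.PosSemidef) (hR : Rᵀ * R = 1) :
    Matrix.trace (P * R) ≤ Matrix.trace P := by
  have h := core_ineq hP hR
  have h0 := trace_transpose_mul_self_nonneg (hP.sqrt - R * hP.sqrt)
  rw [h] at h0; linarith

lemma orth_eq_one_of_trace_eq {P R : Matrix n n ℝ} (hP : P.PosSemidef)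
    (hPdet : IsUnit P.det) (hR : Rᵀ * R = 1)
    (h : Matrix.trace (P * R) = Matrix.trace P) : R = 1 := by
  set T := hP.sqrt with hT
  have hTT : T * T = P := hP.sqrt_mul_self
  have hTdet : IsUnit T.det := by
    have : T.det * T.det = P.det := by rw [← Matrix.det_mul, hTT]
    exact isUnit_of_mul_isUnit_left (this ▸ hPdet)
  have hzero : T - R * T = 0 := by
    apply eq_zero_of_trace_transpose_mul_self
    rw [core_ineq hP hR, h]; ring
  have hRT : R * T = T := by rwa [sub_eq_zero, eq_comm] at hzero
  calc R = R * T * T⁻¹ := by rw [mul_assoc, Matrix.mul_nonsing_inv _ hTdet, mul_one]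
    _ = T * T⁻¹ := by rw [hRT]
    _ = 1 := Matrix.mul_nonsing_inv _ hTdet

/-- Polar-decomposition / Procrustes: for invertible `A` there is an orthogonal `Ω₀`
uniquely maximizing `trace (Aᵀ * Ω)`. -/
lemma procrustes {A : Matrix n n ℝ} (hA : IsUnit A.det) :
    ∃ Ω₀ : Matrix n n ℝ, Ω₀ᵀ * Ω₀ = 1 ∧ ∀ Ω : Matrix n n ℝ, Ωᵀ * Ω = 1 →
      Matrix.trace (Aᵀ * Ω) ≤ Matrix.trace (Aᵀ * Ω₀) ∧
      (Matrix.trace (Aᵀ * Ω) = Matrix.trace (Aᵀ * Ω₀) → Ω = Ω₀) := by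
  have hP : (Aᵀ * A).PosSemidef := by
    have := Matrix.posSemidef_conjTranspose_mul_self A
    rwa [conjTranspose_eq_transpose_of_trivial] at this
  set T := hP.sqrt with hT
  have hTsym : Tᵀ = T := by
    have := hP.posSemidef_sqrt.1
    rwa [Matrix.IsHermitian, conjTranspose_eq_transpose_of_trivial] at this
  have hTT : T * T = Aᵀ * A := hP.sqrt_mul_self
  have hTdet : IsUnit T.det := by
    have : T.det * T.det = A.det * A.det := by
      rw [← Matrix.det_mul, hTT, Matrix.det_mul, Matrix.det_transpose]
    exact isUnit_of_mul_isUnit_left (this ▸ hA.mul hA)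
  have hTPSD : T.PosSemidef := hP.posSemidef_sqrt
  have h1 : (A * T⁻¹)ᵀ * (A * T⁻¹) = 1 := by
    have e : (A * T⁻¹)ᵀ * (A * T⁻¹) = T⁻¹ * ((T * T) * T⁻¹) := by
      rw [transpose_mul, Matrix.transpose_nonsing_inv, hTsym, hTT]; noncomm_ring
    rw [e, mul_assoc T, Matrix.mul_nonsing_inv _ hTdet, mul_one,
      Matrix.nonsing_inv_mul _ hTdet]
  have h2 : (A * T⁻¹) * (A * T⁻¹)ᵀ = 1 := mul_eq_one_comm.mpr h1
  have hAT : Aᵀ = T * (A * T⁻¹)ᵀ := by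
    rw [transpose_mul, Matrix.transpose_nonsing_inv, hTsym, ← mul_assoc,
      Matrix.mul_nonsing_inv _ hTdet, one_mul]
  refine ⟨A * T⁻¹, h1, ?_⟩
  intro Ω hΩ
  have hR : ((A * T⁻¹)ᵀ * Ω)ᵀ * ((A * T⁻¹)ᵀ * Ω) = 1 := by
    have e : ((A * T⁻¹)ᵀ * Ω)ᵀ * ((A * T⁻¹)ᵀ * Ω)
        = Ωᵀ * (((A * T⁻¹) * (A * T⁻¹)ᵀ) * Ω) := by
      rw [transpose_mul, transpose_transpose]; noncomm_ring
    rw [e, h2, one_mul, hΩ]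
  have key : Matrix.trace (Aᵀ * Ω) = Matrix.trace (T * ((A * T⁻¹)ᵀ * Ω)) := by
    rw [hAT, mul_assoc]
  have key0 : Matrix.trace (Aᵀ * (A * T⁻¹)) = Matrix.trace T := by
    rw [hAT, mul_assoc, h1, mul_one]
  constructor
  · rw [key, key0]
    exact trace_mul_orth_le hTPSD hR
  · intro heq
    rw [key, key0] at heq
    have hone := orth_eq_one_of_trace_eq hTPSD hTdet hR heq
    calc Ω = ((A * T⁻¹) * (A * T⁻¹)ᵀ) * Ω := by rw [h2, one_mul]
      _ = (A * T⁻¹) * ((A * T⁻¹)ᵀ * Ω) := by rw [mul_assoc]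
      _ = A * T⁻¹ := by rw [hone, mul_one]

lemma expand_trace (A Ω : Matrix n n ℝ) (hΩ : Ωᵀ * Ω = 1) :
    Matrix.trace ((A - Ω)ᵀ * (A - Ω))
      = Matrix.trace (Aᵀ * A) + (Fintype.card n : ℝ) - 2 * Matrix.trace (Aᵀ * Ω) := by
  have e : (A - Ω)ᵀ * (A - Ω) = Aᵀ*A - Aᵀ*Ω - Ωᵀ*A + Ωᵀ*Ω := by
    rw [transpose_sub]; noncomm_ring
  have e2 : Matrix.trace (Ωᵀ*A) = Matrix.trace (Aᵀ*Ω) := by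
    rw [← Matrix.trace_transpose (Aᵀ*Ω), transpose_mul, transpose_transpose]
  rw [e, hΩ, Matrix.trace_add, Matrix.trace_sub, Matrix.trace_sub, Matrix.trace_one, e2]
  ring

lemma one_le_trace_of_singular {A Ω : Matrix n n ℝ} (hA : A.det = 0)
    (hΩ : Ωᵀ * Ω = 1) : 1 ≤ Matrix.trace ((A - Ω)ᵀ * (A - Ω)) := by
  obtain ⟨v, hv, hAv⟩ := (Matrix.exists_mulVec_eq_zero_iff).mpr hA
  -- normalize v
  have hvs : 0 < ∑ j, v j ^ 2 := by
    rcases Function.ne_iff.mp hv with ⟨j, hj⟩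
    have hj' : v j ≠ 0 := by simpa using hj
    exact Finset.sum_pos' (fun i _ => sq_nonneg _)
      ⟨j, Finset.mem_univ j,
        lt_of_le_of_ne (sq_nonneg _) (Ne.symm (pow_ne_zero 2 hj'))⟩
  set c : ℝ := Real.sqrt (∑ j, v j ^ 2) with hc
  have hc0 : 0 < c := Real.sqrt_pos.mpr hvs
  set u : n → ℝ := c⁻¹ • v with hu
  have hus : ∑ j, u j ^ 2 = 1 := by
    simp only [hu, Pi.smul_apply, smul_eq_mul, mul_pow, ← Finset.mul_sum]
    rw [inv_pow, Real.sq_sqrt hvs.le, inv_mul_cancel₀ hvs.ne']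
  have hAu : A.mulVec u = 0 := by
    rw [hu, Matrix.mulVec_smul, hAv, smul_zero]
  set M := A - Ω with hM
  have hMu : ∀ i, M.mulVec u i = -(Ω.mulVec u i) := by
    intro i
    rw [hM, Matrix.sub_mulVec, hAu]
    simp
  -- ∑ i (Ω.mulVec u i)^2 = 1
  have hΩu : ∑ i, (Ω.mulVec u i) ^ 2 = 1 := by
    have e1 : ∑ i, (Ω.mulVec u i) ^ 2 = (Ω.mulVec u) ⬝ᵥ (Ω.mulVec u) := by
      simp [dotProduct, sq]
    have e2 : u ⬝ᵥ ((Ωᵀ * Ω).mulVec u) = (Ω.mulVec u) ⬝ᵥ (Ω.mulVec u) := by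
      rw [← Matrix.mulVec_mulVec, dotProduct_mulVec, Matrix.vecMul_transpose]
    rw [e1, ← e2, hΩ, Matrix.one_mulVec]
    simpa [dotProduct, sq] using hus
  -- Cauchy-Schwarz rows
  have hCS : ∑ i, (M.mulVec u i) ^ 2 ≤ Matrix.trace (Mᵀ * M) := by
    rw [trace_transpose_mul_self, Finset.sum_comm]
    refine Finset.sum_le_sum fun i _ => ?_
    have := Finset.sum_mul_sq_le_sq_mul_sq Finset.univ (fun j => M i j) u
    rw [hus, mul_one] at this
    simpa [Matrix.mulVec, dotProduct] using this
  have : ∑ i, (M.mulVec u i) ^ 2 = 1 := by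
    simp_rw [hMu, neg_sq]
    exact hΩu
  linarith [hCS, this.symm.le]

lemma unique_min {A : Matrix n n ℝ}
    (h : ∃ Ω : Matrix n n ℝ, Ω * Ωᵀ = 1 ∧ frobNorm (A - Ω) < 1) :
    ∃! Ω : Matrix n n ℝ, Ω * Ωᵀ = 1 ∧
      ∀ Ω' : Matrix n n ℝ, Ω' * Ω'ᵀ = 1 →
        frobNorm (A - Ω) ≤ frobNorm (A - Ω') := by
  obtain ⟨Ω₁, hΩ₁, hlt⟩ := h
  have hΩ₁' : Ω₁ᵀ * Ω₁ = 1 := mul_eq_one_comm.mp hΩ₁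
  have hdet : IsUnit A.det := by
    by_contra h0
    have hA0 : A.det = 0 := by rwa [isUnit_iff_ne_zero, not_not] at h0
    have ht := one_le_trace_of_singular hA0 hΩ₁'
    have : (1:ℝ) ≤ frobNorm (A - Ω₁) := by
      rw [frobNorm, show (1:ℝ) = Real.sqrt 1 from (Real.sqrt_one).symm]
      exact Real.sqrt_le_sqrt ht
    linarith
  obtain ⟨Ω₀, hΩ₀, hbest⟩ := procrustes hdet
  have key : ∀ Ω Ω' : Matrix n n ℝ, Ωᵀ * Ω = 1 → Ω'ᵀ * Ω' = 1 →
      (frobNorm (A - Ω) ≤ frobNorm (A - Ω') ↔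
        Matrix.trace (Aᵀ * Ω') ≤ Matrix.trace (Aᵀ * Ω)) := by
    intro Ω Ω' h1 h2
    rw [frobNorm, frobNorm,
      Real.sqrt_le_sqrt_iff (trace_transpose_mul_self_nonneg _),
      expand_trace A Ω h1, expand_trace A Ω' h2]
    constructor <;> intro <;> linarith
  refine ⟨Ω₀, ⟨mul_eq_one_comm.mpr hΩ₀, fun Ω' hΩ' => ?_⟩, ?_⟩
  · exact (key Ω₀ Ω' hΩ₀ (mul_eq_one_comm.mp hΩ')).mpr
      (hbest Ω' (mul_eq_one_comm.mp hΩ')).1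
  · rintro y ⟨hy, hymin⟩
    have hy' : yᵀ * y = 1 := mul_eq_one_comm.mp hy
    have h1 : frobNorm (A - y) ≤ frobNorm (A - Ω₀) :=
      hymin Ω₀ (mul_eq_one_comm.mpr hΩ₀)
    have h2 : Matrix.trace (Aᵀ * Ω₀) ≤ Matrix.trace (Aᵀ * y) :=
      (key y Ω₀ hy' hΩ₀).mp h1
    exact (hbest y hy').2 (le_antisymm (hbest y hy').1 h2)

lemma bad_example (d : ℕ) (hd : 1 ≤ d) :
    ∃ A : Matrix (Fin d) (Fin d) ℝ, ∃ Ω₁ Ω₂ : Matrix (Fin d) (Fin d) ℝ,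
        Ω₁ ≠ Ω₂ ∧ Ω₁ * Ω₁ᵀ = 1 ∧ Ω₂ * Ω₂ᵀ = 1 ∧
        frobNorm (A - Ω₁) = 1 ∧ frobNorm (A - Ω₂) = 1 ∧
        ∀ Ω : Matrix (Fin d) (Fin d) ℝ, Ω * Ωᵀ = 1 → 1 ≤ frobNorm (A - Ω) := by
  set i₀ : Fin d := ⟨0, hd⟩ with hi₀
  set E : Matrix (Fin d) (Fin d) ℝ := Matrix.single i₀ i₀ 1 with hE
  have hEsym : Eᵀ = E := by
    ext i j
    simp only [hE, Matrix.transpose_apply, Matrix.single, Matrix.of_apply]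
    exact if_congr and_comm rfl rfl
  have hEE : E * E = E := by
    rw [hE, Matrix.single_mul_single_same, mul_one]
  have htrE : Matrix.trace E = 1 := by
    simp only [hE, Matrix.trace, Matrix.diag, Matrix.single, Matrix.of_apply,
      and_self]
    simp
  refine ⟨1 - E, 1, 1 - E - E, ?_, by simp, ?_, ?_, ?_, ?_⟩
  · intro h
    have := congrFun (congrFun h i₀) i₀
    simp only [Matrix.sub_apply, Matrix.one_apply_eq, hE, Matrix.single,
      Matrix.of_apply, and_self, if_true] at this
    norm_num at this
  · have key : (1 - E - E) * (1 - E - E) - 1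
        = (E*E - E) + (E*E - E) + (E*E - E) + (E*E - E) := by noncomm_ring
    rw [hEE] at key
    simp only [sub_self, add_zero, zero_add] at key
    have h2 : (1 - E - E) * (1 - E - E) = 1 := by
      have := sub_eq_zero.mp key
      linear_combination (norm := skip) this
      abel
    rw [transpose_sub, transpose_sub, transpose_one, hEsym]
    exact h2
  · have : (1:Matrix (Fin d) (Fin d) ℝ) - E - 1 = -E := by abel
    rw [this, frobNorm, transpose_neg, neg_mul_neg, hEsym, hEE, htrE, Real.sqrt_one]
  · have : (1:Matrix (Fin d) (Fin d) ℝ) - E - (1 - E - E) = E := by abel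
    rw [this, frobNorm, hEsym, hEE, htrE, Real.sqrt_one]
  · intro Ω hΩ
    have hΩ' : Ωᵀ * Ω = 1 := mul_eq_one_comm.mp hΩ
    -- diagonal entries at most 1
    have hdiag : ∀ i : Fin d, Ω i i ≤ 1 := by
      intro i
      have h1 : (Ω * Ωᵀ) i i = 1 := by rw [hΩ, Matrix.one_apply_eq]
      have h2 : ∑ j, Ω i j * Ω i j = 1 := by
        rw [← h1, Matrix.mul_apply]
        simp
      have h3 : Ω i i * Ω i i ≤ 1 := by
        rw [← h2]
        exact Finset.single_le_sum (f := fun j => Ω i j * Ω i j) (fun j _ => mul_self_nonneg _) (Finset.mem_univ i)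
      exact le_trans (le_abs_self _) (abs_le_one_iff_mul_self_le_one.mpr h3)
    -- trace (E * Ω) = Ω i₀ i₀
    have htrEΩ : Matrix.trace (E * Ω) = Ω i₀ i₀ := by
      rw [Matrix.trace]
      rw [Finset.sum_eq_single i₀]
      · rw [Matrix.diag_apply, hE,
          Matrix.single_mul_apply_same 1 i₀ i₀ i₀ Ω, one_mul]
      · intro b _ hb
        rw [Matrix.diag_apply, hE,
          Matrix.single_mul_apply_of_ne 1 i₀ i₀ b b hb Ω]
      · simp
    -- trace Ω bound
    have htrΩ : Matrix.trace Ω - Ω i₀ i₀ ≤ (d:ℝ) - 1 := by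
      have hsplit : Matrix.trace Ω = Ω i₀ i₀ + ∑ i ∈ Finset.univ.erase i₀, Ω i i := by
        rw [Matrix.trace]
        exact (Finset.add_sum_erase _ _ (Finset.mem_univ i₀)).symm
      have hbound : ∑ i ∈ Finset.univ.erase i₀, Ω i i ≤ ((d - 1 : ℕ) : ℝ) := by
        calc ∑ i ∈ Finset.univ.erase i₀, Ω i i
            ≤ (Finset.univ.erase i₀).card • (1:ℝ) :=
              Finset.sum_le_card_nsmul _ _ _ (fun i _ => hdiag i)
          _ = ((d - 1 : ℕ) : ℝ) := by
              rw [Finset.card_erase_of_mem (Finset.mem_univ i₀), Finset.card_univ,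
                Fintype.card_fin, nsmul_eq_mul, mul_one]
      have hcast : ((d - 1 : ℕ) : ℝ) = (d:ℝ) - 1 := by
        rw [Nat.cast_sub hd, Nat.cast_one]
      rw [hsplit]
      linarith [hbound, hcast ▸ hbound]
    -- trace (AᵀA)
    have hAsym : (1 - E)ᵀ = (1 - E) := by rw [transpose_sub, transpose_one, hEsym]
    have hAA : ((1 - E) : Matrix (Fin d) (Fin d) ℝ) * (1 - E) = 1 - E := by
      have key : ((1 - E) : Matrix (Fin d) (Fin d) ℝ) * (1 - E) - (1 - E)
          = E*E - E := by noncomm_ring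
      rw [hEE, sub_self] at key
      exact sub_eq_zero.mp key
    have htrAA : Matrix.trace ((1 - E)ᵀ * (1 - E)) = (d:ℝ) - 1 := by
      rw [hAsym, hAA, Matrix.trace_sub, Matrix.trace_one, htrE, Fintype.card_fin]
    -- trace (AᵀΩ)
    have htrAΩ : Matrix.trace ((1 - E)ᵀ * Ω) = Matrix.trace Ω - Ω i₀ i₀ := by
      rw [hAsym, sub_mul, one_mul, Matrix.trace_sub, htrEΩ]
    have hexp := expand_trace (1 - E) Ω hΩ'
    rw [htrAA, htrAΩ, Fintype.card_fin] at hexp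
    have h1 : 1 ≤ Matrix.trace (((1 - E) - Ω)ᵀ * ((1 - E) - Ω)) := by
      rw [hexp]; linarith
    rw [frobNorm, show (1:ℝ) = Real.sqrt 1 from (Real.sqrt_one).symm]
    exact Real.sqrt_le_sqrt (by simpa using h1)

end Helpers

/-- The reach of `O(d) ⊆ ℝ^{d×d}` (Frobenius distance) is exactly `1`:
`1` is the greatest `ε ≥ 0` such that every matrix at distance `< ε` from `O(d)` has a
unique closest orthogonal matrix, and there is a matrix at distance exactly `1` from
`O(d)` with two distinct closest orthogonal matrices. -/
theorem reach_orthogonalGroup_eq_one (d : ℕ) (hd : 1 ≤ d) :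
    IsGreatest
      {ε : ℝ | 0 ≤ ε ∧ ∀ A : Matrix (Fin d) (Fin d) ℝ,
        (∃ Ω : Matrix (Fin d) (Fin d) ℝ, Ω * Ωᵀ = 1 ∧ frobNorm (A - Ω) < ε) →
        (∃! Ω : Matrix (Fin d) (Fin d) ℝ, Ω * Ωᵀ = 1 ∧
          ∀ Ω' : Matrix (Fin d) (Fin d) ℝ, Ω' * Ω'ᵀ = 1 →
            frobNorm (A - Ω) ≤ frobNorm (A - Ω'))} 1
    ∧ ∃ A : Matrix (Fin d) (Fin d) ℝ, ∃ Ω₁ Ω₂ : Matrix (Fin d) (Fin d) ℝ,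
        Ω₁ ≠ Ω₂ ∧ Ω₁ * Ω₁ᵀ = 1 ∧ Ω₂ * Ω₂ᵀ = 1 ∧
        frobNorm (A - Ω₁) = 1 ∧ frobNorm (A - Ω₂) = 1 ∧
        ∀ Ω : Matrix (Fin d) (Fin d) ℝ, Ω * Ωᵀ = 1 → 1 ≤ frobNorm (A - Ω) := by
  refine ⟨⟨⟨zero_le_one, fun A hA => unique_min hA⟩, ?_⟩, bad_example d hd⟩
  rintro ε ⟨hε0, hε⟩
  by_contra h
  push_neg at h
  obtain ⟨A, Ω₁, Ω₂, hne, h1, h2, hf1, hf2, hmin⟩ := bad_example d hd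
  obtain ⟨Ω, hΩ, huni⟩ := hε A ⟨Ω₁, h1, by rw [hf1]; exact h⟩
  have e1 : Ω₁ = Ω := huni Ω₁ ⟨h1, fun Ω' hΩ' => le_trans (le_of_eq hf1) (hmin Ω' hΩ')⟩
  have e2 : Ω₂ = Ω := huni Ω₂ ⟨h2, fun Ω' hΩ' => le_trans (le_of_eq hf2) (hmin Ω' hΩ')⟩
  exact hne (e1.trans e2.symm)
end

section
/- The solutions of the orthogonal Procrustes problem min over Ω ∈ O(d) of ‖MΩ - N‖ (Frobenius norm), for M, N ∈ ℝ^{n×d}, are exactly the orthogonal matrices U appearing as the orthogonal factor of a polar decomposition Mᵀ N = U P. In particular, if Mᵀ N has full rank, the minimizer is unique. -/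
open Matrix
open scoped MatrixOrder

section Aux

open NormedSpace

/-- The trace of `Aᵀ * A` is nonnegative. -/
lemma trace_transpose_mul_self_nonneg' {m k : Type*} [Fintype m] [Fintype k]
    (A : Matrix m k ℝ) : 0 ≤ trace (Aᵀ * A) := by
  apply Finset.sum_nonneg
  intro j _
  simp only [diag_apply, mul_apply, transpose_apply]
  exact Finset.sum_nonneg fun i _ => mul_self_nonneg _

lemma eq_zero_of_trace_transpose_mul_self' {m k : Type*} [Fintype m] [Fintype k]
    {A : Matrix m k ℝ} (h : trace (Aᵀ * A) = 0) : A = 0 := by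
  have h' : ∑ j, ∑ i, A i j * A i j = 0 := by
    rw [← h]; simp [Matrix.trace, diag_apply, mul_apply, transpose_apply]
  ext i j
  have h1 := (Finset.sum_eq_zero_iff_of_nonneg (fun j _ =>
    Finset.sum_nonneg fun i _ => mul_self_nonneg (A i j))).mp h' j (Finset.mem_univ j)
  have h2 := (Finset.sum_eq_zero_iff_of_nonneg (fun i _ =>
    mul_self_nonneg (A i j))).mp h1 i (Finset.mem_univ i)
  simpa [mul_self_eq_zero] using h2

/-- If `S` is skew-symmetric and `B` maximizes `trace (W * B)` over orthogonal `W` at `W = 1`,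
then `trace (S * B) = 0` (first-order condition along `t ↦ exp (t • S)`). -/
lemma trace_skew_eq_zero' {d : ℕ} {B S : Matrix (Fin d) (Fin d) ℝ} (hS : Sᵀ = -S)
    (hmax : ∀ W : Matrix (Fin d) (Fin d) ℝ, W * Wᵀ = 1 → trace (W * B) ≤ trace B) :
    trace (S * B) = 0 := by
  letI : SeminormedRing (Matrix (Fin d) (Fin d) ℝ) := Matrix.linftyOpSemiNormedRing
  letI : NormedRing (Matrix (Fin d) (Fin d) ℝ) := Matrix.linftyOpNormedRing
  letI : NormedAlgebra ℝ (Matrix (Fin d) (Fin d) ℝ) := Matrix.linftyOpNormedAlgebra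
  have horth : ∀ t : ℝ, (exp (t • S)) * (exp (t • S))ᵀ = 1 := by
    intro t
    rw [← Matrix.exp_transpose, transpose_smul, hS, smul_neg,
      ← Matrix.exp_add_of_commute (t • S) (-(t • S)) ((Commute.refl (t • S)).neg_right)]
    simp [exp_zero]
  have hexp0 : exp ((0:ℝ) • S) = 1 := by simp [exp_zero]
  let L : Matrix (Fin d) (Fin d) ℝ →ₗ[ℝ] ℝ :=
    (Matrix.traceLinearMap (Fin d) ℝ ℝ).comp (LinearMap.mulRight ℝ B)
  have hL : ∀ X, L X = trace (X * B) := fun X => rfl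
  have h1 : HasDerivAt (fun t : ℝ => exp (t • S)) S 0 := by
    have := hasDerivAt_exp_smul_const (𝕂 := ℝ) S (0:ℝ)
    rwa [zero_smul, exp_zero, one_mul] at this
  have hd : HasDerivAt (fun t : ℝ => trace (exp (t • S) * B)) (trace (S * B)) 0 := by
    have := (L.toContinuousLinearMap.hasFDerivAt (x := exp ((0:ℝ) • S))).comp_hasDerivAt 0 h1
    exact this
  have hloc : IsLocalMax (fun t : ℝ => trace (exp (t • S) * B)) 0 := by
    apply Filter.Eventually.of_forall
    intro t
    simp only [hexp0, one_mul]
    exact hmax _ (horth t)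
  exact hloc.hasDerivAt_eq_zero hd

lemma trace_vecMulVec_mul' {d : ℕ} (x : Fin d → ℝ) (B : Matrix (Fin d) (Fin d) ℝ) :
    trace (vecMulVec x x * B) = x ⬝ᵥ (Bᵀ *ᵥ x) := by
  simp only [Matrix.trace, diag_apply, mul_apply, vecMulVec_apply, dotProduct, mulVec,
    transpose_apply, dotProduct, Finset.mul_sum]
  apply Finset.sum_congr rfl
  intro i _
  apply Finset.sum_congr rfl
  intro j _
  ring

lemma vecMulVec_mul_vecMulVec' {d : ℕ} (x : Fin d → ℝ) :
    vecMulVec x x * vecMulVec x x = (x ⬝ᵥ x) • vecMulVec x x := by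
  ext i j
  simp only [mul_apply, vecMulVec_apply, Matrix.smul_apply, smul_eq_mul, dotProduct, Finset.sum_mul,
    Finset.mul_sum]
  apply Finset.sum_congr rfl
  intro k _
  ring

/-- Householder reflections are orthogonal. -/
lemma householder_orth' {d : ℕ} {x : Fin d → ℝ} (hx : x ⬝ᵥ x ≠ 0) :
    (1 - (2 / (x ⬝ᵥ x)) • vecMulVec x x) * (1 - (2 / (x ⬝ᵥ x)) • vecMulVec x x)ᵀ = 1 := by
  have ht : (vecMulVec x x)ᵀ = vecMulVec x x := by
    ext i j; simp [vecMulVec_apply, transpose_apply, mul_comm]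
  rw [transpose_sub, transpose_one, transpose_smul, ht]
  set a := x ⬝ᵥ x with ha
  set c := 2 / a with hc
  simp only [sub_mul, mul_sub, one_mul, mul_one, Matrix.smul_mul, Matrix.mul_smul,
    vecMulVec_mul_vecMulVec', ← ha, smul_smul]
  have hca : c * (c * a) = c + c := by rw [hc]; field_simp; ring
  rw [hca, add_smul]
  abel

/-- If `trace (W * B) ≤ trace B` for every orthogonal `W`, then `B` is positive semidefinite. -/
lemma posSemidef_of_trace_max' {d : ℕ} {B : Matrix (Fin d) (Fin d) ℝ}
    (hmax : ∀ W : Matrix (Fin d) (Fin d) ℝ, W * Wᵀ = 1 → trace (W * B) ≤ trace B) :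
    B.PosSemidef := by
  have hsymm : Bᵀ = B := by
    have hS : (B - Bᵀ)ᵀ = -(B - Bᵀ) := by rw [transpose_sub, transpose_transpose]; abel
    have h0 := trace_skew_eq_zero' hS hmax
    have key : trace ((B - Bᵀ)ᵀ * (B - Bᵀ)) = 0 := by
      have e1 : trace (Bᵀ * Bᵀ) = trace (B * B) := by
        rw [← trace_transpose (B * B), transpose_mul]
      have e2 : trace (B * Bᵀ) = trace (Bᵀ * B) := trace_mul_comm _ _
      have h0' : trace (B * B) - trace (Bᵀ * B) = 0 := by
        simpa [sub_mul, trace_sub] using h0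
      simp only [transpose_sub, transpose_transpose, sub_mul, mul_sub, trace_sub]
      linarith
    have := eq_zero_of_trace_transpose_mul_self' key
    rw [sub_eq_zero] at this
    exact this.symm
  refine posSemidef_iff_dotProduct_mulVec.mpr
    ⟨by rw [Matrix.IsHermitian, conjTranspose_eq_transpose_of_trivial]; exact hsymm, ?_⟩
  intro x
  by_contra hneg
  push_neg at hneg
  simp only [star_trivial] at hneg ⊢
  have hx : x ≠ 0 := by
    rintro rfl; simp at hneg
  have ha0 : (0:ℝ) ≤ x ⬝ᵥ x := Finset.sum_nonneg fun i _ => mul_self_nonneg _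
  have hane : x ⬝ᵥ x ≠ 0 := by
    intro h
    exact hx (dotProduct_self_eq_zero.mp h)
  have hapos : 0 < x ⬝ᵥ x := lt_of_le_of_ne ha0 (Ne.symm hane)
  set W := (1 : Matrix (Fin d) (Fin d) ℝ) - (2 / (x ⬝ᵥ x)) • vecMulVec x x with hW
  have horth := householder_orth' hane
  have htr : trace (W * B) = trace B - (2 / (x ⬝ᵥ x)) * (x ⬝ᵥ (B *ᵥ x)) := by
    rw [hW, sub_mul, one_mul, Matrix.smul_mul, trace_sub, trace_smul,
      trace_vecMulVec_mul', hsymm]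
    simp
  have := hmax W horth
  rw [htr] at this
  nlinarith [hneg, hapos, div_pos (by norm_num : (0:ℝ) < 2) hapos]

lemma dot_le_of_orth' {d : ℕ} {W : Matrix (Fin d) (Fin d) ℝ} (hW : W * Wᵀ = 1)
    (u : Fin d → ℝ) : u ⬝ᵥ (W *ᵥ u) ≤ u ⬝ᵥ u := by
  have hWtW : Wᵀ * W = 1 := mul_eq_one_comm.mp hW
  set v := W *ᵥ u with hv
  have hvv : v ⬝ᵥ v = u ⬝ᵥ u := by
    calc v ⬝ᵥ v = (u ᵥ* Wᵀ) ⬝ᵥ v := by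
          rw [hv, ← Matrix.mulVec_transpose, transpose_transpose]
      _ = u ⬝ᵥ (Wᵀ *ᵥ v) := (Matrix.dotProduct_mulVec u Wᵀ v).symm
      _ = u ⬝ᵥ u := by rw [hv, Matrix.mulVec_mulVec, hWtW, Matrix.one_mulVec]
  have hcs : (u ⬝ᵥ v) ^ 2 ≤ (u ⬝ᵥ u) * (v ⬝ᵥ v) := by
    have := Finset.sum_mul_sq_le_sq_mul_sq Finset.univ u v
    simpa [dotProduct, sq] using this
  rw [hvv] at hcs
  have huu : 0 ≤ u ⬝ᵥ u := Finset.sum_nonneg fun i _ => mul_self_nonneg _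
  nlinarith [hcs, huu]

/-- `trace (W * P) ≤ trace P` for orthogonal `W` and positive semidefinite `P`. -/
lemma trace_orth_mul_psd_le' {d : ℕ} {W P : Matrix (Fin d) (Fin d) ℝ}
    (hW : W * Wᵀ = 1) (hP : P.PosSemidef) : trace (W * P) ≤ trace P := by
  obtain ⟨C, hC⟩ : ∃ C : Matrix (Fin d) (Fin d) ℝ, P = Cᴴ * C := ⟨CFC.sqrt P, by
    rw [(CFC.sqrt_nonneg P).posSemidef.1.eq, CFC.sqrt_mul_sqrt_self P hP.nonneg]⟩
  have hC' : P = Cᵀ * C := by rw [hC]; rfl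
  rw [hC']
  have h1 : trace (W * (Cᵀ * C)) = trace (C * W * Cᵀ) := by
    rw [← mul_assoc, trace_mul_cycle]
  have h2 : trace (Cᵀ * C) = trace (C * Cᵀ) := trace_mul_comm _ _
  rw [h1, h2]
  apply Finset.sum_le_sum
  intro i _
  have e1 : (C * W * Cᵀ).diag i = (fun j => C i j) ⬝ᵥ (W *ᵥ (fun j => C i j)) := by
    simp only [diag_apply, mul_apply, dotProduct, mulVec, transpose_apply, Finset.sum_mul,
      Finset.mul_sum]
    rw [Finset.sum_comm]
    apply Finset.sum_congr rfl; intro j _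
    apply Finset.sum_congr rfl; intro k _
    ring
  have e2 : (C * Cᵀ).diag i = (fun j => C i j) ⬝ᵥ (fun j => C i j) := by
    simp [diag_apply, mul_apply, dotProduct, transpose_apply]
  rw [e1, e2]
  exact dot_le_of_orth' hW _

lemma trace_expand' {n d : ℕ} (M N : Matrix (Fin n) (Fin d) ℝ)
    {Ω : Matrix (Fin d) (Fin d) ℝ} (hΩ : Ω * Ωᵀ = 1) :
    trace ((M * Ω - N)ᵀ * (M * Ω - N)) =
      trace (Mᵀ * M) + trace (Nᵀ * N) - 2 * trace (Ωᵀ * (Mᵀ * N)) := by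
  have h1 : trace ((Ωᵀ * Mᵀ) * (M * Ω)) = trace (Mᵀ * M) := by
    rw [trace_mul_comm]
    have : M * Ω * (Ωᵀ * Mᵀ) = M * Mᵀ := by
      rw [Matrix.mul_assoc, ← Matrix.mul_assoc Ω, hΩ, Matrix.one_mul]
    rw [this, trace_mul_comm]
  have h2 : trace (Nᵀ * (M * Ω)) = trace (Ωᵀ * (Mᵀ * N)) := by
    rw [← trace_transpose (Nᵀ * (M * Ω))]
    congr 1
    rw [transpose_mul, transpose_mul, transpose_transpose, Matrix.mul_assoc]
  have h3 : trace ((Ωᵀ * Mᵀ) * N) = trace (Ωᵀ * (Mᵀ * N)) := by rw [Matrix.mul_assoc]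
  rw [transpose_sub, transpose_mul, Matrix.sub_mul, Matrix.mul_sub, Matrix.mul_sub,
    trace_sub, trace_sub, trace_sub, h1, h2, h3]
  ring

lemma frob_iff_trace' {n d : ℕ} (M N : Matrix (Fin n) (Fin d) ℝ)
    {Ω Ω' : Matrix (Fin d) (Fin d) ℝ} (hΩ : Ω * Ωᵀ = 1) (hΩ' : Ω' * Ω'ᵀ = 1) :
    (frobNorm (M * Ω - N) ≤ frobNorm (M * Ω' - N) ↔
      trace (Ω'ᵀ * (Mᵀ * N)) ≤ trace (Ωᵀ * (Mᵀ * N))) := by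
  unfold frobNorm
  rw [Real.sqrt_le_sqrt_iff (trace_transpose_mul_self_nonneg' _)]
  rw [trace_expand' M N hΩ, trace_expand' M N hΩ']
  constructor <;> intro h <;> linarith

lemma isUnit_of_rank_eq' {d : ℕ} {A : Matrix (Fin d) (Fin d) ℝ} (h : A.rank = d) : IsUnit A := by
  have hr : LinearMap.range A.mulVecLin = ⊤ := by
    apply Submodule.eq_top_of_finrank_eq
    rw [Matrix.rank] at h
    rw [h, Module.finrank_fintype_fun_eq_card, Fintype.card_fin]
  have hunit : IsUnit A.mulVecLin := (LinearMap.isUnit_iff_range_eq_top _).mpr hr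
  have heq : A.mulVecLin = Matrix.toLinAlgEquiv' A := by
    apply LinearMap.ext
    intro v
    rw [Matrix.toLinAlgEquiv'_apply]
    rfl
  rw [heq] at hunit
  have h2 := hunit.map (Matrix.toLinAlgEquiv' (R := ℝ) (n := Fin d)).symm.toRingEquiv.toRingHom
  simpa using h2

end Aux

/-- The solutions of the orthogonal Procrustes problem `min_{Ω ∈ O(d)} ‖MΩ - N‖` are
exactly the orthogonal factors of polar decompositions of `Mᵀ N`; in particular, the
minimizer is unique when `Mᵀ N` has full rank. -/
theorem orthogonal_procrustes
    (n d : ℕ) (M N : Matrix (Fin n) (Fin d) ℝ) :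
    (∀ Ω : Matrix (Fin d) (Fin d) ℝ, Ω * Ωᵀ = 1 →
      ((∀ Ω' : Matrix (Fin d) (Fin d) ℝ, Ω' * Ω'ᵀ = 1 →
          frobNorm (M * Ω - N) ≤ frobNorm (M * Ω' - N)) ↔
        ∃ P : Matrix (Fin d) (Fin d) ℝ, P.PosSemidef ∧ Mᵀ * N = Ω * P))
    ∧ ((Mᵀ * N).rank = d →
        ∃! Ω : Matrix (Fin d) (Fin d) ℝ, Ω * Ωᵀ = 1 ∧
          ∀ Ω' : Matrix (Fin d) (Fin d) ℝ, Ω' * Ω'ᵀ = 1 →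
            frobNorm (M * Ω - N) ≤ frobNorm (M * Ω' - N)) := by
  have part1 : ∀ Ω : Matrix (Fin d) (Fin d) ℝ, Ω * Ωᵀ = 1 →
      ((∀ Ω' : Matrix (Fin d) (Fin d) ℝ, Ω' * Ω'ᵀ = 1 →
          frobNorm (M * Ω - N) ≤ frobNorm (M * Ω' - N)) ↔
        ∃ P : Matrix (Fin d) (Fin d) ℝ, P.PosSemidef ∧ Mᵀ * N = Ω * P) := by
    intro Ω hΩ
    constructor
    · intro hmin
      set B := Ωᵀ * (Mᵀ * N) with hB
      have hmax : ∀ W : Matrix (Fin d) (Fin d) ℝ, W * Wᵀ = 1 → trace (W * B) ≤ trace B := by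
        intro W hW
        have hWtW : Wᵀ * W = 1 := mul_eq_one_comm.mp hW
        have hΩ'orth : (Ω * Wᵀ) * (Ω * Wᵀ)ᵀ = 1 := by
          rw [transpose_mul, transpose_transpose, Matrix.mul_assoc, ← Matrix.mul_assoc Wᵀ,
            hWtW, Matrix.one_mul, hΩ]
        have := (frob_iff_trace' M N hΩ hΩ'orth).mp (hmin _ hΩ'orth)
        calc trace (W * B) = trace ((Ω * Wᵀ)ᵀ * (Mᵀ * N)) := by
              rw [transpose_mul, transpose_transpose, hB, Matrix.mul_assoc]
          _ ≤ trace (Ωᵀ * (Mᵀ * N)) := this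
          _ = trace B := by rw [hB]
      refine ⟨B, posSemidef_of_trace_max' hmax, ?_⟩
      rw [hB, ← Matrix.mul_assoc, hΩ, Matrix.one_mul]
    · rintro ⟨P, hP, hA⟩ Ω' hΩ'
      rw [frob_iff_trace' M N hΩ hΩ']
      have hΩtΩ : Ωᵀ * Ω = 1 := mul_eq_one_comm.mp hΩ
      have hWorth : (Ω'ᵀ * Ω) * (Ω'ᵀ * Ω)ᵀ = 1 := by
        rw [transpose_mul, transpose_transpose, Matrix.mul_assoc, ← Matrix.mul_assoc Ω,
          hΩ, Matrix.one_mul, mul_eq_one_comm.mp hΩ']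
      calc trace (Ω'ᵀ * (Mᵀ * N)) = trace ((Ω'ᵀ * Ω) * P) := by
            rw [hA, ← Matrix.mul_assoc]
        _ ≤ trace P := trace_orth_mul_psd_le' hWorth hP
        _ = trace (Ωᵀ * (Mᵀ * N)) := by
            rw [hA, ← Matrix.mul_assoc, hΩtΩ, Matrix.one_mul]
  refine ⟨part1, ?_⟩
  intro hrank
  obtain ⟨A, hAdef⟩ : ∃ X : Matrix (Fin d) (Fin d) ℝ, X = Mᵀ * N := ⟨_, rfl⟩
  rw [← hAdef] at hrank
  have hU : IsUnit A := isUnit_of_rank_eq' hrank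
  have hdet : IsUnit A.det := (Matrix.isUnit_iff_isUnit_det A).mp hU
  have hAtdet : IsUnit Aᵀ.det := by rwa [Matrix.det_transpose]
  have hAtA : (Aᵀ * A).PosSemidef := Matrix.posSemidef_conjTranspose_mul_self A
  have hPsd : (CFC.sqrt (Aᵀ * A)).PosSemidef := (CFC.sqrt_nonneg (Aᵀ * A)).posSemidef
  set P := CFC.sqrt (Aᵀ * A) with hPdefn
  have hPP : P * P = Aᵀ * A := CFC.sqrt_mul_sqrt_self _ hAtA.nonneg
  have hPdet : IsUnit P.det := by
    have hsq : P.det * P.det = A.det * A.det := by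
      have := congrArg Matrix.det hPP
      rwa [Matrix.det_mul, Matrix.det_mul, Matrix.det_transpose] at this
    rw [isUnit_iff_ne_zero] at hdet ⊢
    intro h0
    rw [h0, mul_zero] at hsq
    exact hdet (by nlinarith [hsq])
  have hPt : Pᵀ = P := hPsd.1
  have hinv : P⁻¹ * P⁻¹ = A⁻¹ * (Aᵀ)⁻¹ := by
    rw [← Matrix.mul_inv_rev, hPP, Matrix.mul_inv_rev]
  have key : A * P⁻¹ * P⁻¹ = (Aᵀ)⁻¹ := by
    rw [mul_assoc, hinv, ← mul_assoc, Matrix.mul_nonsing_inv A hdet, one_mul]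
  have hΩ₀orth : (A * P⁻¹) * (A * P⁻¹)ᵀ = 1 := by
    rw [transpose_mul, Matrix.transpose_nonsing_inv, hPt, ← mul_assoc, key,
      Matrix.nonsing_inv_mul Aᵀ hAtdet]
  have hAP : A = (A * P⁻¹) * P := by
    rw [mul_assoc, Matrix.nonsing_inv_mul P hPdet, mul_one]
  have hmin₀ : ∀ Ω' : Matrix (Fin d) (Fin d) ℝ, Ω' * Ω'ᵀ = 1 →
      frobNorm (M * (A * P⁻¹) - N) ≤ frobNorm (M * Ω' - N) :=
    (part1 (A * P⁻¹) hΩ₀orth).mpr ⟨P, hPsd, by rw [← hAdef, ← hAP]⟩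
  refine ⟨A * P⁻¹, ⟨hΩ₀orth, hmin₀⟩, ?_⟩
  rintro Ω₁ ⟨hΩ₁, hmin₁⟩
  obtain ⟨P₁, hP₁, hA₁⟩ := (part1 Ω₁ hΩ₁).mp hmin₁
  rw [← hAdef] at hA₁
  have hP₁t : P₁ᵀ = P₁ := hP₁.1
  have hΩ₁tΩ₁ : Ω₁ᵀ * Ω₁ = 1 := mul_eq_one_comm.mp hΩ₁
  have hP₁P₁ : P₁ * P₁ = Aᵀ * A := by
    calc P₁ * P₁ = P₁ᵀ * ((Ω₁ᵀ * Ω₁) * P₁) := by rw [hP₁t, hΩ₁tΩ₁, one_mul]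
      _ = (Ω₁ * P₁)ᵀ * (Ω₁ * P₁) := by
          rw [transpose_mul, hP₁t, mul_assoc, mul_assoc]
      _ = Aᵀ * A := by rw [← hA₁]
  have hP₁eq : P₁ = P := by
    rw [← CFC.sqrt_sq P₁ hP₁.nonneg, ← CFC.sqrt_sq P hPsd.nonneg]; congr 1
    rw [pow_two, pow_two, hP₁P₁, hPP]
  calc Ω₁ = Ω₁ * (P * P⁻¹) := by rw [Matrix.mul_nonsing_inv P hPdet, mul_one]
    _ = (Ω₁ * P₁) * P⁻¹ := by rw [← hP₁eq, mul_assoc]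
    _ = A * P⁻¹ := by rw [← hA₁]
end
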